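/- Let Γ be a group acting properly discontinuously by isometries on ℍ³, and let L₁, L₂ be complete geodesics of ℍ³, γ₁, γ₂ ∈ Γ hyperbolic with axes L₁, L₂ and compact segments l₁ ⊂ L₁, l₂ ⊂ L₂ with Lᵢ = ⋃_{n∈ℤ} γᵢⁿ·lᵢ. If the projections L̄₁ = π(L₁) and L̄₂ = π(L₂) to Γ\ℍ³ intersect in infinitely many points, then L̄₁ = L̄₂. -/

import Mathlib

open Pointwise

/-- If Γ acts properly discontinuously by isometries on X (= ℍ³), L₁ and L₂
are complete geodesics (so that an infinite intersection of L₁ with a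
Γ-translate of L₂ forces equality), γ₁, γ₂ ∈ Γ are hyperbolic with axes L₁, L₂
swept out by compact segments l₁, l₂, and the projections of L₁ and L₂ to
Γ\X intersect in infinitely many points, then these projections coincide. -/
theorem closed_geodesics_finite_intersection
    {X : Type*} [MetricSpace X] (Γ : Type*) [Group Γ] [MulAction Γ X]
    (hiso : ∀ γ : Γ, Isometry (fun x : X => γ • x))
    (hpd : ∀ K : Set X, IsCompact K →
      {γ : Γ | (((γ • ·) '' K) ∩ K).Nonempty}.Finite)
    (L₁ L₂ : Set X)
    (hgeo : ∀ γ : Γ, (L₁ ∩ γ • L₂).Infinite → L₁ = γ • L₂)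
    (γ₁ γ₂ : Γ) (l₁ l₂ : Set X) (hc₁ : IsCompact l₁) (hc₂ : IsCompact l₂)
    (hl₁ : l₁ ⊆ L₁) (hl₂ : l₂ ⊆ L₂)
    (hL₁ : L₁ = ⋃ n : ℤ, γ₁ ^ n • l₁) (hL₂ : L₂ = ⋃ n : ℤ, γ₂ ^ n • l₂)
    (hinf : ((Quotient.mk (MulAction.orbitRel Γ X) '' L₁) ∩
        (Quotient.mk (MulAction.orbitRel Γ X) '' L₂)).Infinite) :
    Quotient.mk (MulAction.orbitRel Γ X) '' L₁ =
      Quotient.mk (MulAction.orbitRel Γ X) '' L₂ := by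
  classical
  set π : X → Quotient (MulAction.orbitRel Γ X) :=
    Quotient.mk (MulAction.orbitRel Γ X) with hπ
  have hπsmul : ∀ (δ : Γ) (x : X), π (δ • x) = π x := fun δ x =>
    Quotient.sound ⟨δ, rfl⟩
  -- the set of points of l₁ lying in some translate of l₂
  set S : Set X := {a | a ∈ l₁ ∧ ∃ δ : Γ, a ∈ δ • l₂} with hS
  -- every point of the intersection of the projections lifts to a point of S
  have hlift : ∀ q ∈ (π '' L₁) ∩ (π '' L₂), ∃ a ∈ S, π a = q := by
    rintro q ⟨⟨x, hx, rfl⟩, y, hy, hxy⟩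
    rw [hL₁] at hx
    simp only [Set.mem_iUnion] at hx
    obtain ⟨n, hn⟩ := hx
    obtain ⟨a, ha, rfl⟩ := hn
    rw [hL₂] at hy
    simp only [Set.mem_iUnion] at hy
    obtain ⟨m, hm⟩ := hy
    obtain ⟨b, hb, rfl⟩ := hm
    -- from hxy : π (γ₂^m • b) = π (γ₁^n • a), get a group element
    obtain ⟨γ, hγ⟩ : (γ₂ ^ m • b) ∈ MulAction.orbit Γ (γ₁ ^ n • a) :=
      Quotient.exact hxy
    refine ⟨a, ⟨ha, (γ₁ ^ n)⁻¹ * γ⁻¹ * γ₂ ^ m, ?_⟩, (hπsmul (γ₁ ^ n) a).symm⟩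
    refine ⟨b, hb, ?_⟩
    have : γ⁻¹ • (γ₂ ^ m • b) = γ⁻¹ • (γ • γ₁ ^ n • a) := congrArg (γ⁻¹ • ·) hγ.symm
    rw [inv_smul_smul] at this
    calc ((γ₁ ^ n)⁻¹ * γ⁻¹ * γ₂ ^ m) • b
        = (γ₁ ^ n)⁻¹ • γ⁻¹ • γ₂ ^ m • b := by
          rw [mul_smul, mul_smul]
      _ = a := by rw [this, inv_smul_smul]
  have hSinf : S.Infinite := by
    intro hSfin
    have hsub : (π '' L₁) ∩ (π '' L₂) ⊆ π '' S := by
      intro q hq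
      obtain ⟨a, haS, haq⟩ := hlift q hq
      exact ⟨a, haS, haq⟩
    exact ((hSfin.image π).subset hsub).not_infinite hinf
  -- proper discontinuity: only finitely many δ can occur
  have hF : {δ : Γ | (((δ • ·) '' (l₁ ∪ l₂)) ∩ (l₁ ∪ l₂)).Nonempty}.Finite :=
    hpd (l₁ ∪ l₂) (hc₁.union hc₂)
  set F := {δ : Γ | (((δ • ·) '' (l₁ ∪ l₂)) ∩ (l₁ ∪ l₂)).Nonempty} with hFdef
  have hSsub : S ⊆ ⋃ δ ∈ F, (l₁ ∩ δ • l₂) := by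
    rintro a ⟨ha₁, δ, ha₂⟩
    have hδF : δ ∈ F := by
      obtain ⟨b, hb, hba⟩ := ha₂
      exact ⟨a, ⟨b, Or.inr hb, hba⟩, Or.inl ha₁⟩
    exact Set.mem_biUnion hδF ⟨ha₁, ha₂⟩
  -- some single δ gives an infinite intersection
  obtain ⟨δ, -, hδinf⟩ : ∃ δ ∈ F, (l₁ ∩ δ • l₂).Infinite := by
    by_contra h
    push_neg at h
    exact ((hF.biUnion h).subset hSsub).not_infinite hSinf
  have hLL : L₁ = δ • L₂ := by
    apply hgeo δ
    exact hδinf.mono (Set.inter_subset_inter hl₁ (Set.smul_set_mono hl₂))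
  rw [hLL]
  ext q
  constructor
  · rintro ⟨x, ⟨y, hy, rfl⟩, rfl⟩
    exact ⟨y, hy, (hπsmul δ y).symm⟩
  · rintro ⟨y, hy, rfl⟩
    exact ⟨δ • y, Set.smul_mem_smul_set hy, hπsmul δ y⟩
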